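/- Let e_θ = (cos θ, sin θ), φ with e_φ = -e_θ, and R(φ) the rotation matrix [[cos(φ/2), -sin(φ/2)],[sin(φ/2), cos(φ/2)]]. Then for all s ∈ ℝ, η ∈ ℝ², α ≥ 0, ε > 0, r > 0: (1/√r)·R(φ)⁻¹ · A(s√r·e_θ + √r·η + (α/√ε)e_θ^⊥) · R(φ) = -[[s + e_θ·η, e_θ^⊥·η + α/√(rε)],[e_θ^⊥·η + α/√(rε), -(s + e_θ·η)]], where A(w) = [[w₁,w₂],[w₂,-w₁]] and e_θ^⊥ = (-sin θ, cos θ). Consequently, if v solves i∂ₛv = A(sr·e_θ + η + (α/√ε)e_θ^⊥)v, then u(s,η) = R(φ)⁻¹ v(s/√r, √r η) solves the Landau–Zener system (1/i)∂ₛu = [[s + z₁, z₂],[z₂, -s - z₁]]u with z₁ = e_θ·η, z₂ = e_θ^⊥·η + α/√(rε). -/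

import Mathlib

open Matrix

/-- `A(w) = [[w₁, w₂], [w₂, -w₁]]`, viewed as a complex matrix with real entries. -/
noncomputable def Amat (w : ℝ × ℝ) : Matrix (Fin 2) (Fin 2) ℂ :=
  !![(w.1 : ℂ), (w.2 : ℂ); (w.2 : ℂ), -(w.1 : ℂ)]

/-- The half-angle rotation matrix `R(φ)`. -/
noncomputable def Rot (φ : ℝ) : Matrix (Fin 2) (Fin 2) ℂ :=
  !![(Real.cos (φ/2) : ℂ), -(Real.sin (φ/2) : ℂ);
     (Real.sin (φ/2) : ℂ), (Real.cos (φ/2) : ℂ)]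

/-- The Landau–Zener matrix `[[s + z₁, z₂], [z₂, -s - z₁]]`. -/
noncomputable def LZmat (s z₁ z₂ : ℝ) : Matrix (Fin 2) (Fin 2) ℂ :=
  !![((s + z₁ : ℝ) : ℂ), (z₂ : ℂ); (z₂ : ℂ), -((s + z₁ : ℝ) : ℂ)]

lemma Rot_det (φ : ℝ) : (Rot φ).det = 1 := by
  simp [Rot, Matrix.det_fin_two]
  norm_cast
  linear_combination Complex.sin_sq_add_cos_sq ((φ:ℂ)/2)

lemma Rot_inv (φ : ℝ) : (Rot φ)⁻¹ =
    !![(Real.cos (φ/2) : ℂ), (Real.sin (φ/2) : ℂ);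
       -(Real.sin (φ/2) : ℂ), (Real.cos (φ/2) : ℂ)] := by
  rw [Matrix.inv_def, Rot_det, Matrix.adjugate_fin_two]
  simp [Rot]

lemma Rot_mul_inv (φ : ℝ) : Rot φ * (Rot φ)⁻¹ = 1 := by
  apply Matrix.mul_nonsing_inv
  simp [Rot_det]

lemma conj_lemma (θ φ : ℝ)
    (hφ : Real.cos φ = -Real.cos θ ∧ Real.sin φ = -Real.sin θ) (w : ℝ × ℝ) :
    (Rot φ)⁻¹ * Amat w * Rot φ =
      !![(-(w.1 * Real.cos θ + w.2 * Real.sin θ) : ℂ),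
         ((w.1 * Real.sin θ - w.2 * Real.cos θ) : ℂ);
         ((w.1 * Real.sin θ - w.2 * Real.cos θ) : ℂ),
         ((w.1 * Real.cos θ + w.2 * Real.sin θ) : ℂ)] := by
  have h1 : Real.cos (φ/2) ^ 2 - Real.sin (φ/2) ^ 2 = -Real.cos θ := by
    have := Real.cos_two_mul (φ/2)
    have h2 : 2 * (φ/2) = φ := by ring
    rw [h2] at this
    nlinarith [Real.sin_sq_add_cos_sq (φ/2), hφ.1]
  have h2 : 2 * Real.sin (φ/2) * Real.cos (φ/2) = -Real.sin θ := by
    have := Real.sin_two_mul (φ/2)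
    have h2 : 2 * (φ/2) = φ := by ring
    rw [h2] at this
    rw [← this, hφ.2]
  have hc1 := congrArg Complex.ofReal h1
  have hc2 := congrArg Complex.ofReal h2
  push_cast at hc1 hc2
  rw [Rot_inv]
  ext i j
  fin_cases i <;> fin_cases j <;>
    (simp [Amat, Rot, Matrix.mul_apply, Fin.sum_univ_two]
     first
       | linear_combination (w.1 : ℂ) * hc1 + (w.2 : ℂ) * hc2
       | linear_combination (w.2 : ℂ) * hc1 - (w.1 : ℂ) * hc2
       | linear_combination (-(w.1 : ℂ)) * hc1 - (w.2 : ℂ) * hc2)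

/-- Conjugating `A(s√r e_θ + √r η + (α/√ε) e_θ^⊥)` by the half-angle rotation `R(φ)`
(with `e_φ = -e_θ`) and dividing by `√r` produces minus the Landau–Zener matrix with
`z₁ = e_θ·η` and `z₂ = e_θ^⊥·η + α/√(rε)`.  Consequently, if `v` solves the model
equation `i ∂ₛ v = A(s r e_θ + √r η + (α/√ε) e_θ^⊥)v`, then
`u(s) = R(φ)⁻¹ v(s/√r)` solves the Landau–Zener system `(1/i) ∂ₛ u = LZ(s, z₁, z₂) u`. -/
theorem model_to_LandauZener (θ φ r α ε : ℝ) (hr : 0 < r) (hε : 0 < ε) (hα : 0 ≤ α)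
    (hφ : Real.cos φ = -Real.cos θ ∧ Real.sin φ = -Real.sin θ) :
    let eθ : ℝ × ℝ := (Real.cos θ, Real.sin θ)
    let eθp : ℝ × ℝ := (-Real.sin θ, Real.cos θ)
    (∀ (s : ℝ) (η : ℝ × ℝ),
      ((Real.sqrt r)⁻¹ : ℂ) •
          ((Rot φ)⁻¹ *
            Amat ((s * Real.sqrt r) • eθ + Real.sqrt r • η + (α / Real.sqrt ε) • eθp) *
            Rot φ)
        = -LZmat s (eθ.1 * η.1 + eθ.2 * η.2)
            (eθp.1 * η.1 + eθp.2 * η.2 + α / Real.sqrt (r * ε))) ∧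
    (∀ (η : ℝ × ℝ) (v : ℝ → Fin 2 → ℂ),
      (∀ s : ℝ, HasDerivAt v
          ((-Complex.I) •
            (Amat ((s * r) • eθ + Real.sqrt r • η + (α / Real.sqrt ε) • eθp)).mulVec (v s)) s) →
      ∀ s : ℝ, HasDerivAt (fun s' => ((Rot φ)⁻¹).mulVec (v (s' / Real.sqrt r)))
          (Complex.I •
            (LZmat s (eθ.1 * η.1 + eθ.2 * η.2)
              (eθp.1 * η.1 + eθp.2 * η.2 + α / Real.sqrt (r * ε))).mulVec
              (((Rot φ)⁻¹).mulVec (v (s / Real.sqrt r)))) s) := by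
  intro eθ eθp
  have hsr : (0:ℝ) < Real.sqrt r := Real.sqrt_pos.mpr hr
  have hse : (0:ℝ) < Real.sqrt ε := Real.sqrt_pos.mpr hε
  have hmul : Real.sqrt (r * ε) = Real.sqrt r * Real.sqrt ε := Real.sqrt_mul hr.le ε
  have hsrC : ((Real.sqrt r : ℝ) : ℂ) ≠ 0 := by exact_mod_cast hsr.ne'
  have hseC : ((Real.sqrt ε : ℝ) : ℂ) ≠ 0 := by exact_mod_cast hse.ne'
  have key : ∀ (s : ℝ) (η : ℝ × ℝ),
      ((Real.sqrt r)⁻¹ : ℂ) •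
          ((Rot φ)⁻¹ *
            Amat ((s * Real.sqrt r) • eθ + Real.sqrt r • η + (α / Real.sqrt ε) • eθp) *
            Rot φ)
        = -LZmat s (eθ.1 * η.1 + eθ.2 * η.2)
            (eθp.1 * η.1 + eθp.2 * η.2 + α / Real.sqrt (r * ε)) := by
    intro s η
    have hpyth' := congrArg Complex.ofReal (Real.sin_sq_add_cos_sq θ)
    push_cast at hpyth'
    rw [conj_lemma θ φ hφ, hmul]
    ext i j
    fin_cases i <;> fin_cases j <;>
      (simp [LZmat, eθ, eθp, Prod.smul_def, Matrix.smul_apply, Matrix.neg_apply]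
       field_simp
       ring_nf
       first
         | linear_combination (-(↑s * (Real.sqrt r : ℂ) * (Real.sqrt ε : ℂ)^2)) * hpyth'
         | linear_combination (-(α : ℂ)) * hpyth'
         | linear_combination (↑s * (Real.sqrt r : ℂ) * (Real.sqrt ε : ℂ)) * hpyth'
         | linear_combination (-(↑s * (Real.sqrt r : ℂ) * (Real.sqrt ε : ℂ))) * hpyth'
         | linear_combination (-2 * (↑s * (Real.sqrt r : ℂ) * (Real.sqrt ε : ℂ))) * hpyth')
  refine ⟨key, ?_⟩
  intro η v hv s
  have harg : s / Real.sqrt r * r = s * Real.sqrt r := by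
    have h2 : Real.sqrt r * Real.sqrt r = r := Real.mul_self_sqrt hr.le
    calc s / Real.sqrt r * r = s / Real.sqrt r * (Real.sqrt r * Real.sqrt r) := by rw [h2]
      _ = s * Real.sqrt r := by rw [← mul_assoc, div_mul_cancel₀ s hsr.ne']
  set w : ℝ × ℝ := (s * Real.sqrt r) • eθ + Real.sqrt r • η + (α / Real.sqrt ε) • eθp with hw
  have hv' : HasDerivAt v ((-Complex.I) • (Amat w).mulVec (v (s / Real.sqrt r)))
      (s / Real.sqrt r) := by
    have := hv (s / Real.sqrt r)
    rwa [harg] at this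
  have hg : HasDerivAt (fun s' : ℝ => s' / Real.sqrt r) (Real.sqrt r)⁻¹ s := by
    simpa [one_div] using (hasDerivAt_id s).div_const (Real.sqrt r)
  have hcomp : HasDerivAt (fun s' => v (s' / Real.sqrt r))
      ((Real.sqrt r)⁻¹ • ((-Complex.I) • (Amat w).mulVec (v (s / Real.sqrt r)))) s :=
    hv'.scomp s hg
  set L : (Fin 2 → ℂ) →L[ℂ] (Fin 2 → ℂ) :=
    LinearMap.toContinuousLinearMap (Matrix.mulVecLin ((Rot φ)⁻¹)) with hL
  have hfinal := (L.restrictScalars ℝ).hasFDerivAt.comp_hasDerivAt s hcomp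
  have hLapp : ∀ x, (L.restrictScalars ℝ) x = ((Rot φ)⁻¹).mulVec x := fun x => rfl
  convert hfinal using 1
  any_goals rfl
  have key' : (Rot φ)⁻¹ * Amat w = (Real.sqrt r : ℂ) •
      ((-LZmat s (eθ.1 * η.1 + eθ.2 * η.2)
        (eθp.1 * η.1 + eθp.2 * η.2 + α / Real.sqrt (r * ε))) * (Rot φ)⁻¹) := by
    have hk := key s η
    calc (Rot φ)⁻¹ * Amat w = ((Rot φ)⁻¹ * Amat w * Rot φ) * (Rot φ)⁻¹ := by
          rw [Matrix.mul_assoc, Rot_mul_inv, Matrix.mul_one]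
      _ = ((Real.sqrt r : ℂ) • (((Real.sqrt r : ℝ) : ℂ)⁻¹ •
            ((Rot φ)⁻¹ * Amat w * Rot φ))) * (Rot φ)⁻¹ := by
          rw [smul_smul, mul_inv_cancel₀ hsrC, one_smul]
      _ = _ := by rw [hk, Matrix.smul_mul]
  rw [hLapp]
  have hreal : ∀ (c : ℝ) (x : Fin 2 → ℂ), c • x = ((c : ℝ) : ℂ) • x := by
    intro c x; funext i; simp [Complex.real_smul]
  rw [hreal]
  simp only [Matrix.mulVec_smul, smul_smul]
  conv_rhs => rw [Matrix.mulVec_mulVec, key', Matrix.smul_mulVec, Matrix.neg_mul,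
    Matrix.neg_mulVec, ← Matrix.mulVec_mulVec, smul_neg, smul_neg, smul_smul, ← neg_smul]
  congr 1
  push_cast
  field_simp
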